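/- Monotonicity of potential-adjusted energetic costs along a path (core of the A* invariant): let G = (V, A, c) be a weighted directed graph, B > 0, and p : V → ℝ a valid potential. If the path P = u₀u₁…u_k is traversable from a full battery of capacity B, and d_i denotes the energetic cost d_B(u₀…u_i) of the i-th prefix of P, then the sequence d_i + p(u_i), i = 0, 1, …, k, is nondecreasing. -/
import Mathlib

open scoped Classical

/-- The clamped addition `x ⊕_B y = [x + y]₀ᴮ` on `ℝ ∪ {∞}` (modeled inside `EReal`;
inputs are never `⊥`). -/
noncomputable def eplus (B : ℝ) (x y : EReal) : EReal :=
  if x + y < 0 then 0 else if x + y ≤ (B : EReal) then x + y else ⊤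

/-- `batt B b cst i` is the charge `b_i` of the battery after traversing the first `i`
arcs of a path whose `i`-th arc (0-indexed) has cost `cst i`, starting from charge `b`. -/
noncomputable def batt (B b : ℝ) (cst : ℕ → ℝ) : ℕ → ℝ
  | 0 => b
  | i + 1 => min (batt B b cst i - cst i) B

/-- The path with arc costs `cst 0, …, cst (k-1)` is traversable from initial charge `b`. -/
def Trav (B b : ℝ) (cst : ℕ → ℝ) (k : ℕ) : Prop :=
  ∀ i, i < k → cst i ≤ batt B b cst i

/-- The energetic cost `d_{B,b}(P) = b - b_k` of a path with arc costs
`cst 0, …, cst (k-1)`, or `∞` if not traversable from initial charge `b`. -/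
noncomputable def dE (B b : ℝ) (cst : ℕ → ℝ) (k : ℕ) : EReal :=
  if Trav B b cst k then ((b - batt B b cst k : ℝ) : EReal) else ⊤

/-- `u 0, u 1, …, u k` is a path in the graph with arc relation `Arc`. -/
def IsPath {V : Type*} (Arc : V → V → Prop) (u : ℕ → V) (k : ℕ) : Prop :=
  ∀ i, i < k → Arc (u i) (u (i + 1))

/-- The energetic cost `δ_{B,b}(s,t)`: the minimum of `d_{B,b}(P)` over all `s`–`t`
paths `P` (`∞` if there is none). -/
noncomputable def deltaE {V : Type*} (Arc : V → V → Prop) (c : V → V → ℝ)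
    (B b : ℝ) (s t : V) : EReal :=
  sInf { x : EReal | ∃ (u : ℕ → V) (k : ℕ), IsPath Arc u k ∧ u 0 = s ∧ u k = t ∧
    x = dE B b (fun i => c (u i) (u (i + 1))) k }

/-- The standard distance `δ(s,t)`: the infimum of total costs of `s`–`t` paths. -/
noncomputable def distE {V : Type*} (Arc : V → V → Prop) (c : V → V → ℝ)
    (s t : V) : EReal :=
  sInf { x : EReal | ∃ (u : ℕ → V) (k : ℕ), IsPath Arc u k ∧ u 0 = s ∧ u k = t ∧
    x = ((∑ i ∈ Finset.range k, c (u i) (u (i + 1)) : ℝ) : EReal) }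

/-- The graph has no negative cycles. -/
def NoNegCycles {V : Type*} (Arc : V → V → Prop) (c : V → V → ℝ) : Prop :=
  ∀ (u : ℕ → V) (k : ℕ), IsPath Arc u k → u k = u 0 → 1 ≤ k →
    0 ≤ ∑ i ∈ Finset.range k, c (u i) (u (i + 1))

/-- core of the A* invariant: if `p` is a valid potential and the path
`u₀…u_k` is traversable from a full battery of capacity `B`, then the sequence
`d_i + p(u_i)` of potential-adjusted energetic costs of prefixes is nondecreasing. -/
theorem potential_adjusted_cost_monotone {V : Type*} [Fintype V] (Arc : V → V → Prop)
    (c : V → V → ℝ) (B : ℝ) (hB : 0 < B) (p : V → ℝ)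
    (hp : ∀ u v, Arc u v → 0 ≤ c u v - p u + p v)
    (u : ℕ → V) (k : ℕ) (hP : IsPath Arc u k)
    (hT : Trav B B (fun i => c (u i) (u (i + 1))) k) :
    ∀ i j, i ≤ j → j ≤ k →
      dE B B (fun i => c (u i) (u (i + 1))) i + ((p (u i) : ℝ) : EReal) ≤
        dE B B (fun i => c (u i) (u (i + 1))) j + ((p (u j) : ℝ) : EReal) := by
  set cst : ℕ → ℝ := fun i => c (u i) (u (i + 1)) with hcst
  have hTj : ∀ m, m ≤ k → Trav B B cst m :=
    fun m hm i him => hT i (lt_of_lt_of_le him hm)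
  have step : ∀ n, n < k →
      B - batt B B cst n + p (u n) ≤ B - batt B B cst (n + 1) + p (u (n + 1)) := by
    intro n hn
    have h1 : batt B B cst (n + 1) ≤ batt B B cst n - cst n := by
      simp [batt]
    have h2 : 0 ≤ cst n - p (u n) + p (u (n + 1)) := hp _ _ (hP n hn)
    simp only [hcst] at h1 h2 ⊢
    linarith
  have mono : ∀ i j, i ≤ j → j ≤ k →
      B - batt B B cst i + p (u i) ≤ B - batt B B cst j + p (u j) := by
    intro i j hij hjk
    induction j with
    | zero => simp [Nat.le_zero.mp hij]
    | succ n ih =>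
      rcases Nat.lt_succ_iff_lt_or_eq.mp (Nat.lt_succ_of_le hij) with h | h
      · exact le_trans (ih (Nat.lt_succ_iff.mp h) (le_of_lt hjk))
          (step n (lt_of_lt_of_le (Nat.lt_succ_self n) hjk))
      · rw [h]
  intro i j hij hjk
  rw [dE, if_pos (hTj i (le_trans hij hjk)), dE, if_pos (hTj j hjk)]
  rw [← EReal.coe_add, ← EReal.coe_add, EReal.coe_le_coe_iff]
  exact mono i j hij hjk
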